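/- Let N ≥ 2, T ≥ 1, let ℓ_{i,t} ∈ [0,1] for i ∈ {1,...,N}, t ∈ {1,...,T}, and suppose (2/3)·√(2·ln N / T) < 1/2. Define w_i^1 = 1 and w_i^{t+1} = w_i^t·(1 - α·ℓ_{i,t}) with α = (2/3)·√(2·ln N / T). Then for every index k: Σ_{t=1}^T (Σ_i w_i^t·ℓ_{i,t} / Σ_i w_i^t) - Σ_{t=1}^T ℓ_{k,t} ≤ 3·√(T·ln N / 2). -/

import Mathlib

lemma mw_aux_log_one_sub (x : ℝ) (h0 : 0 ≤ x) (h2 : x ≤ 1/2) :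
    -x - x^2 ≤ Real.log (1 - x) := by
  set f : ℝ → ℝ := fun y => Real.log (1 - y) + y + y^2 with hf
  have hmono : MonotoneOn f (Set.Icc (0:ℝ) (1/2)) := by
    have hconv : Convex ℝ (Set.Icc (0:ℝ) (1/2)) := convex_Icc _ _
    have hder : ∀ y ∈ Set.Ioo (0:ℝ) (1/2),
        HasDerivAt f (-1/(1-y) + (1 + 2*y)) y := by
      intro y hy
      have hne : (1:ℝ) - y ≠ 0 := by
        have := hy.2; intro h; nlinarith [hy.1]
      have h1 : HasDerivAt (fun y : ℝ => 1 - y) (-1) y := by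
        simpa using (hasDerivAt_id y).const_sub 1
      have hlog : HasDerivAt (fun y : ℝ => Real.log (1 - y)) (-1/(1-y)) y :=
        h1.log hne
      have hpoly : HasDerivAt (fun y : ℝ => y + y^2) (1 + 2*y) y := by
        have := (hasDerivAt_id' y).fun_add (hasDerivAt_pow 2 y)
        simpa using this
      have h := hlog.fun_add hpoly
      simp only [hf]
      exact h.congr_of_eventuallyEq (Filter.Eventually.of_forall fun z => by beta_reduce; ring)
    apply monotoneOn_of_deriv_nonneg hconv
    · apply ContinuousOn.add
      apply ContinuousOn.add
      · apply ContinuousOn.log (by fun_prop)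
        intro y hy
        have := hy.2; intro h; simp at hy; nlinarith [hy.1]
      · fun_prop
      · fun_prop
    · rw [interior_Icc]
      intro y hy
      exact (hder y hy).differentiableAt.differentiableWithinAt
    · rw [interior_Icc]
      intro y hy
      rw [(hder y hy).deriv]
      have h1y : (0:ℝ) < 1 - y := by nlinarith [hy.1, hy.2]
      have : -1/(1-y) + (1 + 2*y) = y*(1-2*y)/(1-y) := by field_simp; ring
      rw [this]
      have : 0 ≤ y*(1-2*y) := by nlinarith [hy.1, hy.2]
      positivity
  have h := hmono (Set.mem_Icc.mpr ⟨le_refl 0, by norm_num⟩)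
    (Set.mem_Icc.mpr ⟨h0, h2⟩) h0
  simp only [hf] at h
  simp at h
  linarith

theorem mw_sublinear_regret (N T : ℕ) (hN : 2 ≤ N) (hT : 1 ≤ T)
    (α : ℝ) (hαdef : α = (2/3) * Real.sqrt (2 * Real.log N / T)) (hα2 : α < 1/2)
    (ℓ : Fin N → ℕ → ℝ) (hℓ : ∀ i, ∀ t ∈ Finset.Icc 1 T, ℓ i t ∈ Set.Icc (0:ℝ) 1)
    (w : Fin N → ℕ → ℝ) (hw1 : ∀ i, w i 1 = 1)
    (hrec : ∀ i, ∀ t ∈ Finset.Icc 1 T, w i (t + 1) = w i t * (1 - α * ℓ i t))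
    (k : Fin N) :
    ∑ t ∈ Finset.Icc 1 T, (∑ i, w i t * ℓ i t) / (∑ i, w i t) -
      ∑ t ∈ Finset.Icc 1 T, ℓ k t ≤
      3 * Real.sqrt (T * Real.log N / 2) := by
  have hTpos : (0:ℝ) < T := by exact_mod_cast hT
  have hN1 : (1:ℝ) < N := by exact_mod_cast lt_of_lt_of_le one_lt_two hN
  have hlogN : 0 < Real.log N := Real.log_pos hN1
  have hαpos : 0 < α := by
    rw [hαdef]
    apply mul_pos (by norm_num)
    exact Real.sqrt_pos.mpr (by positivity)
  -- positivity of weights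
  have hwpos : ∀ t, 1 ≤ t → t ≤ T + 1 → ∀ i, 0 < w i t := by
    intro t
    induction t with
    | zero => omega
    | succ n ih =>
      intro h1 h2 i
      rcases Nat.eq_zero_or_pos n with hn | hn
      · subst hn; rw [hw1]; norm_num
      · have hnT : n ∈ Finset.Icc 1 T := Finset.mem_Icc.mpr ⟨hn, by omega⟩
        rw [hrec i n hnT]
        have hwn := ih hn (by omega) i
        have hl := hℓ i n hnT
        have h1 : α * ℓ i n ≤ α * 1 := mul_le_mul_of_nonneg_left hl.2 hαpos.le
        apply mul_pos hwn
        linarith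
  haveI : NeZero N := ⟨by omega⟩
  set W : ℕ → ℝ := fun t => ∑ i, w i t with hW
  set p : ℕ → ℝ := fun t => (∑ i, w i t * ℓ i t) / W t with hp
  have hWpos : ∀ t, 1 ≤ t → t ≤ T + 1 → 0 < W t := by
    intro t h1 h2
    exact Finset.sum_pos (fun i _ => hwpos t h1 h2 i) Finset.univ_nonempty
  have hp01 : ∀ t ∈ Finset.Icc 1 T, 0 ≤ p t ∧ p t ≤ 1 := by
    intro t ht
    obtain ⟨ht1, ht2⟩ := Finset.mem_Icc.mp ht
    have hWt := hWpos t ht1 (by omega)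
    constructor
    · apply div_nonneg _ hWt.le
      apply Finset.sum_nonneg
      intro i _
      exact mul_nonneg (hwpos t ht1 (by omega) i).le (hℓ i t ht).1
    · rw [div_le_one hWt]
      apply Finset.sum_le_sum
      intro i _
      nth_rewrite 2 [show w i t = w i t * 1 by ring]
      exact mul_le_mul_of_nonneg_left (hℓ i t ht).2 (hwpos t ht1 (by omega) i).le
  have hWrec : ∀ t ∈ Finset.Icc 1 T, W (t + 1) = W t * (1 - α * p t) := by
    intro t ht
    obtain ⟨ht1, ht2⟩ := Finset.mem_Icc.mp ht
    have hWt := (hWpos t ht1 (by omega)).ne'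
    have : W (t + 1) = ∑ i, w i t * (1 - α * ℓ i t) := by
      apply Finset.sum_congr rfl
      intro i _
      exact hrec i t ht
    have h2 : ∑ i, w i t * (1 - α * ℓ i t) = W t - α * ∑ i, w i t * ℓ i t := by
      rw [hW]
      simp only
      rw [Finset.mul_sum, ← Finset.sum_sub_distrib]
      apply Finset.sum_congr rfl
      intro i _
      ring
    rw [this, h2, hp]
    simp only
    field_simp
  -- telescoping for W
  have hWlog : ∀ n, n ≤ T →
      Real.log (W (n + 1)) =
        Real.log N + ∑ t ∈ Finset.Icc 1 n, Real.log (1 - α * p t) := by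
    intro n
    induction n with
    | zero =>
      intro _
      simp [hW, hw1]
    | succ m ih =>
      intro hm
      have hmem : m + 1 ∈ Finset.Icc 1 T := Finset.mem_Icc.mpr ⟨by omega, hm⟩
      rw [hWrec (m + 1) hmem]
      have hWm := hWpos (m + 1) (by omega) (by omega)
      have hpm := hp01 (m + 1) hmem
      have hfac : (0:ℝ) < 1 - α * p (m + 1) := by
        have : α * p (m + 1) ≤ α * 1 := mul_le_mul_of_nonneg_left hpm.2 hαpos.le
        linarith
      rw [Real.log_mul hWm.ne' hfac.ne', ih (by omega),
        Finset.sum_Icc_succ_top (by omega : 1 ≤ m + 1)]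
      ring
  -- telescoping for w k
  have hklog : ∀ n, n ≤ T →
      Real.log (w k (n + 1)) =
        ∑ t ∈ Finset.Icc 1 n, Real.log (1 - α * ℓ k t) := by
    intro n
    induction n with
    | zero =>
      intro _
      simp [hw1]
    | succ m ih =>
      intro hm
      have hmem : m + 1 ∈ Finset.Icc 1 T := Finset.mem_Icc.mpr ⟨by omega, hm⟩
      rw [hrec k (m + 1) hmem]
      have hwm := hwpos (m + 1) (by omega) (by omega) k
      have hl := hℓ k (m + 1) hmem
      have hfac : (0:ℝ) < 1 - α * ℓ k (m + 1) := by
        have : α * ℓ k (m + 1) ≤ α * 1 := mul_le_mul_of_nonneg_left hl.2 hαpos.le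
        linarith
      rw [Real.log_mul hwm.ne' hfac.ne', ih (by omega),
        Finset.sum_Icc_succ_top (by omega : 1 ≤ m + 1)]
  -- w k (T+1) ≤ W (T+1)
  have hkW : Real.log (w k (T + 1)) ≤ Real.log (W (T + 1)) := by
    apply Real.log_le_log (hwpos (T + 1) (by omega) le_rfl k)
    apply Finset.single_le_sum (f := fun i => w i (T + 1))
      (fun i _ => (hwpos (T + 1) (by omega) le_rfl i).le) (Finset.mem_univ k)
  have hmain : ∑ t ∈ Finset.Icc 1 T, Real.log (1 - α * ℓ k t) ≤
      Real.log N + ∑ t ∈ Finset.Icc 1 T, Real.log (1 - α * p t) := by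
    rw [← hklog T le_rfl, ← hWlog T le_rfl]; exact hkW
  -- lower bound LHS, upper bound RHS
  have hlb : ∀ t ∈ Finset.Icc 1 T,
      -(α * ℓ k t) - α^2 ≤ Real.log (1 - α * ℓ k t) := by
    intro t ht
    have hl := hℓ k t ht
    have hx0 : 0 ≤ α * ℓ k t := mul_nonneg hαpos.le hl.1
    have hx1 : α * ℓ k t ≤ α * 1 := mul_le_mul_of_nonneg_left hl.2 hαpos.le
    have hx2 : α * ℓ k t ≤ 1 / 2 := by linarith
    have h := mw_aux_log_one_sub (α * ℓ k t) hx0 hx2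
    have hsq : (α * ℓ k t)^2 ≤ α^2 := by nlinarith
    linarith
  have hub : ∀ t ∈ Finset.Icc 1 T, Real.log (1 - α * p t) ≤ -(α * p t) := by
    intro t ht
    have hpm := hp01 t ht
    have hfac : (0:ℝ) < 1 - α * p t := by
      have : α * p t ≤ α * 1 := mul_le_mul_of_nonneg_left hpm.2 hαpos.le
      linarith
    have := Real.log_le_sub_one_of_pos hfac
    linarith
  have hsum1 : ∑ t ∈ Finset.Icc 1 T, (-(α * ℓ k t) - α^2) ≤
      ∑ t ∈ Finset.Icc 1 T, Real.log (1 - α * ℓ k t) :=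
    Finset.sum_le_sum hlb
  have hsum2 : ∑ t ∈ Finset.Icc 1 T, Real.log (1 - α * p t) ≤
      ∑ t ∈ Finset.Icc 1 T, -(α * p t) :=
    Finset.sum_le_sum hub
  have hcard : (Finset.Icc 1 T).card = T := by
    rw [Nat.card_Icc]; omega
  have hexp1 : ∑ t ∈ Finset.Icc 1 T, (-(α * ℓ k t) - α^2) =
      -(α * ∑ t ∈ Finset.Icc 1 T, ℓ k t) - α^2 * T := by
    rw [Finset.sum_sub_distrib, Finset.sum_const, hcard,
      Finset.sum_neg_distrib, ← Finset.mul_sum, nsmul_eq_mul]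
    ring
  have hexp2 : ∑ t ∈ Finset.Icc 1 T, -(α * p t) =
      -(α * ∑ t ∈ Finset.Icc 1 T, p t) := by
    rw [Finset.sum_neg_distrib, ← Finset.mul_sum]
  -- key regret bound
  have hkey : ∑ t ∈ Finset.Icc 1 T, p t - ∑ t ∈ Finset.Icc 1 T, ℓ k t ≤
      Real.log N / α + α * T := by
    set P := ∑ t ∈ Finset.Icc 1 T, p t
    set L := ∑ t ∈ Finset.Icc 1 T, ℓ k t
    have h2 : -(α * L) - α^2 * T ≤ Real.log N + -(α * P) := by
      calc -(α * L) - α^2 * T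
          ≤ Real.log N + ∑ t ∈ Finset.Icc 1 T, Real.log (1 - α * p t) := by
            rw [← hexp1]; exact le_trans hsum1 hmain
        _ ≤ _ := by rw [← hexp2]; linarith [hsum2]
    have hP : α * (P - L) ≤ Real.log N + α^2 * T := by nlinarith
    calc P - L = α * (P - L) / α := by field_simp
      _ ≤ (Real.log N + α^2 * T) / α := by gcongr
      _ = Real.log N / α + α * T := by field_simp
  -- final arithmetic
  have hfinal : Real.log N / α + α * T ≤ 3 * Real.sqrt (T * Real.log N / 2) := by
    set s := Real.sqrt (2 * Real.log N / T) with hs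
    have hs0 : 0 < s := Real.sqrt_pos.mpr (by positivity)
    have hs2 : s^2 = 2 * Real.log N / T := Real.sq_sqrt (by positivity)
    have hsqrt : Real.sqrt (T * Real.log N / 2) = (T / 2) * s := by
      rw [show (T:ℝ) * Real.log N / 2 = ((T:ℝ)/2 * s)^2 by
        rw [mul_pow, hs2]; field_simp]
      exact Real.sqrt_sq (by positivity)
    rw [hsqrt, hαdef]
    have hlog_eq : Real.log N = T * s^2 / 2 := by rw [hs2]; field_simp
    rw [hlog_eq]
    have heq : (T:ℝ) * s^2 / 2 / (2/3 * s) = 3/4 * T * s := by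
      field_simp
      ring
    rw [heq]
    nlinarith [mul_pos hTpos hs0]
  have : ∑ t ∈ Finset.Icc 1 T, (∑ i, w i t * ℓ i t) / (∑ i, w i t) =
      ∑ t ∈ Finset.Icc 1 T, p t := rfl
  rw [this]
  linarith
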